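/- Let S be a finite nonempty set of points in ℝ^m, p ∈ ℝ^m, and suppose p' ∈ conv(S) is a witness, i.e., d(p', v) < d(p, v) for all v ∈ S. Then d(p', x) < d(p, x) for every x ∈ conv(S); in particular, p ∉ conv(S). -/

import Mathlib

/-- If `p' ∈ conv(S)` is a witness (`d(p', v) < d(p, v)` for all `v ∈ S`), then
`d(p', x) < d(p, x)` for every `x ∈ conv(S)`; in particular `p ∉ conv(S)`. -/
theorem witness_separates {m : ℕ} (S : Finset (EuclideanSpace ℝ (Fin m)))
    (hS : S.Nonempty) (p p' : EuclideanSpace ℝ (Fin m))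
    (hp' : p' ∈ convexHull ℝ (S : Set (EuclideanSpace ℝ (Fin m))))
    (hwit : ∀ v ∈ S, dist p' v < dist p v) :
    (∀ x ∈ convexHull ℝ (S : Set (EuclideanSpace ℝ (Fin m))), dist p' x < dist p x) ∧
      p ∉ convexHull ℝ (S : Set (EuclideanSpace ℝ (Fin m))) := by
  have key : ∀ x : EuclideanSpace ℝ (Fin m),
      dist p' x < dist p x ↔ (inner ℝ (p - p') x : ℝ) < (‖p‖ ^ 2 - ‖p'‖ ^ 2) / 2 := by
    intro x
    have h1 : dist p' x < dist p x ↔ dist p' x ^ 2 < dist p x ^ 2 := by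
      constructor
      · intro h; exact pow_lt_pow_left₀ h dist_nonneg two_ne_zero
      · intro h; exact lt_of_pow_lt_pow_left₀ 2 dist_nonneg h
    rw [h1, dist_eq_norm, dist_eq_norm, @norm_sub_sq_real, @norm_sub_sq_real,
      inner_sub_left]
    constructor <;> intro h <;> linarith
  have hconv : Convex ℝ {x : EuclideanSpace ℝ (Fin m) |
      (inner ℝ (p - p') x : ℝ) < (‖p‖ ^ 2 - ‖p'‖ ^ 2) / 2} :=
    convex_halfSpace_lt
      ⟨fun a b => inner_add_right _ _ _, fun c a => real_inner_smul_right _ _ _⟩ _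
  have hsub : convexHull ℝ (S : Set (EuclideanSpace ℝ (Fin m))) ⊆
      {x : EuclideanSpace ℝ (Fin m) |
        (inner ℝ (p - p') x : ℝ) < (‖p‖ ^ 2 - ‖p'‖ ^ 2) / 2} := by
    apply convexHull_min _ hconv
    intro v hv
    exact (key v).mp (hwit v hv)
  have main : ∀ x ∈ convexHull ℝ (S : Set (EuclideanSpace ℝ (Fin m))),
      dist p' x < dist p x := fun x hx => (key x).mpr (hsub hx)
  refine ⟨main, fun hp => ?_⟩
  have h := main p hp
  rw [dist_self] at h
  exact absurd h (not_lt.mpr dist_nonneg)
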